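/- Let C be a bivariate copula admitting a tail dependence function Λ, with maximal tail dependence coefficient χ̄ = sup_{b ∈ (0,∞)} Λ(b,1/b), maximal intermediate tail dependence coefficient χ̄* = χ̄ / sup{ min(a,1/a) : a ∈ argmax_{b ∈ (0,∞)} Λ(b,1/b) }, and maximal tail dependence measure λ̄ = sup_μ λ_μ(C) over all tail generating measures μ. Then: (1) if Λ(1,1) = 0, then χ̄ = χ̄* = λ̄ = 0; (2) if at least one of χ̄, χ̄*, λ̄ is zero, then Λ(1,1) = 0; (3) if Λ(1,1) = 1, then χ̄ = χ̄* = λ̄ = 1; and (4) if χ̄ = 1, then Λ(1,1) = 1. -/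

import Mathlib

open MeasureTheory Filter Set

/-- A bivariate copula: `C : [0,1]² → [0,1]` with the grounded/marginal conditions and
the 2-increasing property. -/
def IsCopula (C : ℝ → ℝ → ℝ) : Prop :=
  (∀ u ∈ Icc (0:ℝ) 1, ∀ v ∈ Icc (0:ℝ) 1, C u v ∈ Icc (0:ℝ) 1) ∧
  (∀ u ∈ Icc (0:ℝ) 1, C u 0 = 0 ∧ C 0 u = 0 ∧ C u 1 = u ∧ C 1 u = u) ∧
  (∀ u u' v v' : ℝ, u ∈ Icc (0:ℝ) 1 → u' ∈ Icc (0:ℝ) 1 →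
    v ∈ Icc (0:ℝ) 1 → v' ∈ Icc (0:ℝ) 1 → u ≤ u' → v ≤ v' →
    0 ≤ C u' v' - C u' v - C u v' + C u v)

/-- `Λ` is the tail dependence function of `C`:
`Λ(u,v) = lim_{p↓0} C(pu,pv)/p` for every `(u,v) ∈ [0,∞)²`. -/
def HasTDF (C Λ : ℝ → ℝ → ℝ) : Prop :=
  ∀ u v : ℝ, 0 ≤ u → 0 ≤ v →
    Tendsto (fun p : ℝ => C (p * u) (p * v) / p)
      (nhdsWithin (0:ℝ) (Ioi 0)) (nhds (Λ u v))

/-- A tail generating measure: a Borel probability measure on `[0,1]²` whose mass is not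
concentrated on `{u = 0} ∪ {v = 0}`. -/
def IsTailGenMeasure (μ : Measure (ℝ × ℝ)) : Prop :=
  IsProbabilityMeasure μ ∧
  μ ((Icc (0:ℝ) 1 ×ˢ Icc (0:ℝ) 1)ᶜ) = 0 ∧
  μ {q : ℝ × ℝ | q.1 = 0 ∨ q.2 = 0} < 1

/-- The μ-tail dependence measure: `λ_μ = (∫ Λ dμ) / (∫ min dμ)`, applied to
the tail dependence function `Λ` of the copula. -/
noncomputable def tdm (Λ : ℝ → ℝ → ℝ) (μ : Measure (ℝ × ℝ)) : ℝ :=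
  (∫ q, Λ q.1 q.2 ∂μ) / (∫ q : ℝ × ℝ, min q.1 q.2 ∂μ)

section lemmas
variable {C Λ : ℝ → ℝ → ℝ}

lemma cop_mono_left (hC : IsCopula C) {u u' v : ℝ} (hu : u ∈ Icc (0:ℝ) 1) (hu' : u' ∈ Icc (0:ℝ) 1)
    (hv : v ∈ Icc (0:ℝ) 1) (h : u ≤ u') : C u v ≤ C u' v := by
  have h2 := hC.2.2 u u' 0 v hu hu' ⟨le_refl 0, zero_le_one⟩ hv h hv.1
  have m1 := (hC.2.1 u hu).1
  have m2 := (hC.2.1 u' hu').1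
  linarith

lemma cop_mono_right (hC : IsCopula C) {u v v' : ℝ} (hu : u ∈ Icc (0:ℝ) 1) (hv : v ∈ Icc (0:ℝ) 1)
    (hv' : v' ∈ Icc (0:ℝ) 1) (h : v ≤ v') : C u v ≤ C u v' := by
  have h2 := hC.2.2 0 u v v' ⟨le_refl 0, zero_le_one⟩ hu hv hv' hu.1 h
  have m1 := (hC.2.1 v hv).2.1
  have m2 := (hC.2.1 v' hv').2.1
  linarith

lemma cop_lip_left (hC : IsCopula C) {u u' v : ℝ} (hu : u ∈ Icc (0:ℝ) 1) (hu' : u' ∈ Icc (0:ℝ) 1)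
    (hv : v ∈ Icc (0:ℝ) 1) (h : u ≤ u') : C u' v - C u v ≤ u' - u := by
  have h2 := hC.2.2 u u' v 1 hu hu' hv ⟨zero_le_one, le_refl 1⟩ h hv.2
  have m1 := (hC.2.1 u hu).2.2.1
  have m2 := (hC.2.1 u' hu').2.2.1
  linarith

lemma cop_lip_right (hC : IsCopula C) {u v v' : ℝ} (hu : u ∈ Icc (0:ℝ) 1) (hv : v ∈ Icc (0:ℝ) 1)
    (hv' : v' ∈ Icc (0:ℝ) 1) (h : v ≤ v') : C u v' - C u v ≤ v' - v := by
  have h2 := hC.2.2 u 1 v v' hu ⟨zero_le_one, le_refl 1⟩ hv hv' hu.2 h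
  have m1 := (hC.2.1 v hv).2.2.2
  have m2 := (hC.2.1 v' hv').2.2.2
  linarith

lemma small_p (u v : ℝ) (hu : 0 ≤ u) (hv : 0 ≤ v) :
    ∀ᶠ p in nhdsWithin (0:ℝ) (Ioi 0),
      0 < p ∧ p * u ∈ Icc (0:ℝ) 1 ∧ p * v ∈ Icc (0:ℝ) 1 := by
  have hS : (0:ℝ) < u + v + 1 := by linarith
  have hδ : 0 < (u + v + 1)⁻¹ := by positivity
  refine Filter.eventually_of_mem (Ioo_mem_nhdsGT_of_mem ⟨le_refl 0, hδ⟩) ?_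
  rintro p ⟨hp0, hpδ⟩
  have hkey := inv_mul_cancel₀ (ne_of_gt hS)
  have hlt : p * (u + v + 1) < 1 := by nlinarith
  exact ⟨hp0, ⟨by positivity, by nlinarith⟩, ⟨by positivity, by nlinarith⟩⟩
end lemmas

section lam
variable {C Λ : ℝ → ℝ → ℝ}

lemma lam_nonneg (hC : IsCopula C) (hΛ : HasTDF C Λ) {u v : ℝ} (hu : 0 ≤ u) (hv : 0 ≤ v) :
    0 ≤ Λ u v := by
  refine ge_of_tendsto (hΛ u v hu hv) ?_
  filter_upwards [small_p u v hu hv] with p hp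
  exact div_nonneg (hC.1 _ hp.2.1 _ hp.2.2).1 hp.1.le

lemma lam_le_min (hC : IsCopula C) (hΛ : HasTDF C Λ) {u v : ℝ} (hu : 0 ≤ u) (hv : 0 ≤ v) :
    Λ u v ≤ min u v := by
  refine le_of_tendsto (hΛ u v hu hv) ?_
  filter_upwards [small_p u v hu hv] with p hp
  obtain ⟨hp0, hpu, hpv⟩ := hp
  have h1 : C (p*u) (p*v) ≤ p*u := by
    have := cop_mono_right hC hpu hpv ⟨zero_le_one, le_refl 1⟩ hpv.2
    rw [(hC.2.1 (p*u) hpu).2.2.1] at this; exact this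
  have h2 : C (p*u) (p*v) ≤ p*v := by
    have := cop_mono_left hC hpu ⟨zero_le_one, le_refl 1⟩ hpv hpu.2
    rw [(hC.2.1 (p*v) hpv).2.2.2] at this; exact this
  rw [div_le_iff₀ hp0]
  rcases le_total u v with h | h
  · rw [min_eq_left h]; nlinarith
  · rw [min_eq_right h]; nlinarith

lemma lam_mono (hC : IsCopula C) (hΛ : HasTDF C Λ) {u v u' v' : ℝ} (hu : 0 ≤ u) (hv : 0 ≤ v)
    (huu : u ≤ u') (hvv : v ≤ v') : Λ u v ≤ Λ u' v' := by
  have hu' : 0 ≤ u' := le_trans hu huu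
  have hv' : 0 ≤ v' := le_trans hv hvv
  refine le_of_tendsto_of_tendsto (hΛ u v hu hv) (hΛ u' v' hu' hv') ?_
  filter_upwards [small_p u' v' hu' hv'] with p hp
  obtain ⟨hp0, hpu', hpv'⟩ := hp
  have hpu : p * u ∈ Icc (0:ℝ) 1 := ⟨by positivity, le_trans (by nlinarith) hpu'.2⟩
  have hpv : p * v ∈ Icc (0:ℝ) 1 := ⟨by positivity, le_trans (by nlinarith) hpv'.2⟩
  have h1 : C (p*u) (p*v) ≤ C (p*u') (p*v) :=
    cop_mono_left hC hpu hpu' hpv (by nlinarith)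
  have h2 : C (p*u') (p*v) ≤ C (p*u') (p*v') :=
    cop_mono_right hC hpu' hpv hpv' (by nlinarith)
  rw [div_le_div_iff₀ hp0 hp0]
  nlinarith
end lam

lemma lam_lip (hC : IsCopula C) (hΛ : HasTDF C Λ) {u v u' v' : ℝ} (hu : 0 ≤ u) (hv : 0 ≤ v)
    (hu' : 0 ≤ u') (hv' : 0 ≤ v') : Λ u v ≤ Λ u' v' + (|u - u'| + |v - v'|) := by
  have hT : Tendsto (fun p : ℝ => C (p * u') (p * v') / p + (|u - u'| + |v - v'|))
      (nhdsWithin (0:ℝ) (Ioi 0)) (nhds (Λ u' v' + (|u - u'| + |v - v'|))) :=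
    (hΛ u' v' hu' hv').add tendsto_const_nhds
  refine le_of_tendsto_of_tendsto (hΛ u v hu hv) hT ?_
  have hU : 0 ≤ max u u' := le_trans hu (le_max_left _ _)
  have hV : 0 ≤ max v v' := le_trans hv (le_max_left _ _)
  filter_upwards [small_p (max u u') (max v v') hU hV] with p hp
  obtain ⟨hp0, hpU, hpV⟩ := hp
  have hmU : p * u ≤ p * max u u' := by nlinarith [le_max_left u u']
  have hmU' : p * u' ≤ p * max u u' := by nlinarith [le_max_right u u']
  have hmV : p * v ≤ p * max v v' := by nlinarith [le_max_left v v']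
  have hmV' : p * v' ≤ p * max v v' := by nlinarith [le_max_right v v']
  have hpu : p * u ∈ Icc (0:ℝ) 1 := ⟨by positivity, le_trans hmU hpU.2⟩
  have hpu' : p * u' ∈ Icc (0:ℝ) 1 := ⟨by positivity, le_trans hmU' hpU.2⟩
  have hpv : p * v ∈ Icc (0:ℝ) 1 := ⟨by positivity, le_trans hmV hpV.2⟩
  have hpv' : p * v' ∈ Icc (0:ℝ) 1 := ⟨by positivity, le_trans hmV' hpV.2⟩
  have h1 : C (p*u) (p*v) ≤ C (p * max u u') (p * max v v') :=
    le_trans (cop_mono_left hC hpu hpU hpv hmU) (cop_mono_right hC hpU hpv hpV hmV)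
  have h2 : C (p * max u u') (p * max v v') - C (p*u') (p * max v v') ≤ p * max u u' - p * u' :=
    cop_lip_left hC hpu' hpU hpV hmU'
  have h3 : C (p*u') (p * max v v') - C (p*u') (p*v') ≤ p * max v v' - p * v' :=
    cop_lip_right hC hpu' hpv' hpV hmV'
  have hau : max u u' - u' ≤ |u - u'| := by
    rcases le_total u u' with h | h
    · rw [max_eq_right h]; simp [abs_nonneg]
    · rw [max_eq_left h, abs_of_nonneg (by linarith)]
  have hav : max v v' - v' ≤ |v - v'| := by
    rcases le_total v v' with h | h
    · rw [max_eq_right h]; simp [abs_nonneg]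
    · rw [max_eq_left h, abs_of_nonneg (by linarith)]
  have : C (p*u) (p*v) ≤ C (p*u') (p*v') + p * (|u - u'| + |v - v'|) := by nlinarith
  rw [div_add' _ _ _ (ne_of_gt hp0), div_le_div_iff₀ hp0 hp0]
  nlinarith

lemma lam_homog (hΛ : HasTDF C Λ) {t : ℝ} (ht : 0 < t) : Λ t t = t * Λ 1 1 := by
  have hmap : Tendsto (fun p : ℝ => p * t) (nhdsWithin (0:ℝ) (Ioi 0)) (nhdsWithin (0:ℝ) (Ioi 0)) := by
    apply tendsto_nhdsWithin_of_tendsto_nhds_of_eventually_within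
    · have : Tendsto (fun p : ℝ => p * t) (nhds 0) (nhds (0 * t)) :=
        (tendsto_id.mul_const t)
      rw [zero_mul] at this
      exact this.mono_left nhdsWithin_le_nhds
    · filter_upwards [eventually_mem_nhdsWithin] with p hp
      exact mul_pos hp ht
  have h1 : Tendsto (fun p : ℝ => t * (C ((p * t) * 1) ((p * t) * 1) / (p * t)))
      (nhdsWithin (0:ℝ) (Ioi 0)) (nhds (t * Λ 1 1)) :=
    ((hΛ 1 1 zero_le_one zero_le_one).comp hmap).const_mul t
  have h2 : Tendsto (fun p : ℝ => C (p * t) (p * t) / p)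
      (nhdsWithin (0:ℝ) (Ioi 0)) (nhds (t * Λ 1 1)) := by
    refine h1.congr' ?_
    filter_upwards [eventually_mem_nhdsWithin] with p hp
    have hp0 : (0:ℝ) < p := hp
    rw [mul_one]
    field_simp
  exact tendsto_nhds_unique (hΛ t t ht.le ht.le) h2

lemma lam_zero_of (hC : IsCopula C) (hΛ : HasTDF C Λ) (h0 : Λ 1 1 = 0) {u v : ℝ}
    (hu : 0 ≤ u) (hv : 0 ≤ v) : Λ u v = 0 := by
  set M := max (max u v) 1 with hM
  have hM1 : (1:ℝ) ≤ M := le_max_right _ _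
  have hM0 : 0 < M := lt_of_lt_of_le one_pos hM1
  have hle : Λ u v ≤ Λ M M :=
    lam_mono hC hΛ hu hv (le_trans (le_max_left u v) (le_max_left _ _))
      (le_trans (le_max_right u v) (le_max_left _ _))
  rw [lam_homog hΛ hM0, h0, mul_zero] at hle
  exact le_antisymm hle (lam_nonneg hC hΛ hu hv)

noncomputable def clampF (Λ : ℝ → ℝ → ℝ) (q : ℝ × ℝ) : ℝ := Λ (max q.1 0) (max q.2 0)

noncomputable def clampM (q : ℝ × ℝ) : ℝ := max 0 (min (min q.1 q.2) 1)

lemma clampF_cont (hC : IsCopula C) (hΛ : HasTDF C Λ) : Continuous (clampF Λ) := by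
  refine LipschitzWith.continuous (K := 2) (LipschitzWith.of_dist_le_mul ?_)
  intro q q'
  rw [Real.dist_eq, Prod.dist_eq, Real.dist_eq, Real.dist_eq]
  have k1 : |max q.1 0 - max q'.1 0| ≤ |q.1 - q'.1| := abs_max_sub_max_le_abs _ _ _
  have k2 : |max q.2 0 - max q'.2 0| ≤ |q.2 - q'.2| := abs_max_sub_max_le_abs _ _ _
  have l1 := lam_lip hC hΛ (le_max_right q.1 0) (le_max_right q.2 0)
    (le_max_right q'.1 0) (le_max_right q'.2 0)
  have l2 := lam_lip hC hΛ (le_max_right q'.1 0) (le_max_right q'.2 0)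
    (le_max_right q.1 0) (le_max_right q.2 0)
  rw [abs_sub_comm (max q'.1 0)] at l2
  rw [abs_sub_comm (max q'.2 0)] at l2
  rw [abs_sub_le_iff]
  have hmax1 := le_max_left |q.1 - q'.1| |q.2 - q'.2|
  have hmax2 := le_max_right |q.1 - q'.1| |q.2 - q'.2|
  push_cast
  constructor
  · simp only [clampF]; linarith
  · simp only [clampF]; linarith

lemma clampM_cont : Continuous clampM :=
  continuous_const.max ((continuous_fst.min continuous_snd).min continuous_const)

lemma tgm_ae {μ : Measure (ℝ × ℝ)} (hμ : IsTailGenMeasure μ) :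
    ∀ᵐ q ∂μ, q ∈ Icc (0:ℝ) 1 ×ˢ Icc (0:ℝ) 1 := by
  rw [MeasureTheory.ae_iff]
  exact hμ.2.1

lemma tdm_mem_Icc (hC : IsCopula C) (hΛ : HasTDF C Λ) {μ : Measure (ℝ × ℝ)}
    (hμ : IsTailGenMeasure μ) : tdm Λ μ ∈ Icc (0:ℝ) 1 := by
  haveI := hμ.1
  have hae := tgm_ae hμ
  have hFmeas : AEStronglyMeasurable (clampF Λ) μ := (clampF_cont hC hΛ).aestronglyMeasurable
  have hMmeas : AEStronglyMeasurable clampM μ := clampM_cont.aestronglyMeasurable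
  have hF0 : ∀ q : ℝ × ℝ, 0 ≤ clampF Λ q := fun q =>
    lam_nonneg hC hΛ (le_max_right _ _) (le_max_right _ _)
  have hFbd : ∀ᵐ q ∂μ, ‖clampF Λ q‖ ≤ 1 := by
    filter_upwards [hae] with q hq
    obtain ⟨h1, h2⟩ := hq
    rw [Real.norm_eq_abs, abs_of_nonneg (hF0 q)]
    have hle := lam_le_min hC hΛ (le_max_right q.1 (0:ℝ)) (le_max_right q.2 (0:ℝ))
    have h1' : max q.1 0 ≤ 1 := max_le h1.2 zero_le_one
    calc clampF Λ q ≤ min (max q.1 0) (max q.2 0) := hle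
    _ ≤ max q.1 0 := min_le_left _ _
    _ ≤ 1 := h1'
  have hMbd : ∀ᵐ q ∂μ, ‖clampM q‖ ≤ 1 := by
    refine Filter.Eventually.of_forall fun q => ?_
    rw [Real.norm_eq_abs, abs_of_nonneg (le_max_left _ _)]
    exact max_le zero_le_one (min_le_right _ _)
  have hFint : Integrable (clampF Λ) μ :=
    MeasureTheory.Integrable.mono' (integrable_const 1) hFmeas hFbd
  have hMint : Integrable clampM μ :=
    MeasureTheory.Integrable.mono' (integrable_const 1) hMmeas hMbd
  have hFeq : (fun q : ℝ × ℝ => Λ q.1 q.2) =ᵐ[μ] clampF Λ := by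
    filter_upwards [hae] with q hq
    obtain ⟨h1, h2⟩ := hq
    simp [clampF, max_eq_left h1.1, max_eq_left h2.1]
  have hMeq : (fun q : ℝ × ℝ => min q.1 q.2) =ᵐ[μ] clampM := by
    filter_upwards [hae] with q hq
    obtain ⟨h1, h2⟩ := hq
    have : min q.1 q.2 ≤ 1 := le_trans (min_le_left _ _) h1.2
    have h0 : 0 ≤ min q.1 q.2 := le_min h1.1 h2.1
    simp [clampM, min_eq_left this, max_eq_right h0]
  have hFM : ∫ q, clampF Λ q ∂μ ≤ ∫ q, clampM q ∂μ := by
    refine integral_mono_ae hFint hMint ?_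
    filter_upwards [hae] with q hq
    obtain ⟨h1, h2⟩ := hq
    have hle := lam_le_min hC hΛ (le_max_right q.1 (0:ℝ)) (le_max_right q.2 (0:ℝ))
    have e1 : max q.1 0 = q.1 := max_eq_left h1.1
    have e2 : max q.2 0 = q.2 := max_eq_left h2.1
    have : min q.1 q.2 ≤ 1 := le_trans (min_le_left _ _) h1.2
    have h0 : 0 ≤ min q.1 q.2 := le_min h1.1 h2.1
    simp only [clampF, clampM, e1, e2] at hle ⊢
    rw [min_eq_left this, max_eq_right h0]
    exact hle
  have hIF0 : 0 ≤ ∫ q, clampF Λ q ∂μ := integral_nonneg hF0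
  have hIM0 : 0 ≤ ∫ q, clampM q ∂μ := le_trans hIF0 hFM
  have htdm : tdm Λ μ = (∫ q, clampF Λ q ∂μ) / (∫ q, clampM q ∂μ) := by
    unfold tdm
    rw [integral_congr_ae hFeq, integral_congr_ae hMeq]
  rw [htdm]
  exact ⟨div_nonneg hIF0 hIM0, div_le_one_of_le₀ hFM hIM0⟩

lemma tdm_zero (hC : IsCopula C) (hΛ : HasTDF C Λ) (h0 : Λ 1 1 = 0) {μ : Measure (ℝ × ℝ)}
    (hμ : IsTailGenMeasure μ) : tdm Λ μ = 0 := by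
  have hFeq : (fun q : ℝ × ℝ => Λ q.1 q.2) =ᵐ[μ] (fun _ => (0:ℝ)) := by
    filter_upwards [tgm_ae hμ] with q hq
    obtain ⟨h1, h2⟩ := hq
    exact lam_zero_of hC hΛ h0 h1.1 h2.1
  unfold tdm
  rw [integral_congr_ae hFeq, integral_zero, zero_div]

lemma dirac_tgm : IsTailGenMeasure (Measure.dirac ((1:ℝ), (1:ℝ))) := by
  refine ⟨by infer_instance, ?_, ?_⟩
  · rw [Measure.dirac_apply' _ ((measurableSet_Icc.prod measurableSet_Icc).compl)]
    rw [Set.indicator_of_notMem]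
    simp [Set.mem_prod]
  · have hms : MeasurableSet {q : ℝ × ℝ | q.1 = 0 ∨ q.2 = 0} := by
      have : {q : ℝ × ℝ | q.1 = 0 ∨ q.2 = 0} =
          (Prod.fst ⁻¹' {(0:ℝ)}) ∪ (Prod.snd ⁻¹' {(0:ℝ)}) := by
        ext q; simp
      rw [this]
      exact (measurable_fst (measurableSet_singleton 0)).union
        (measurable_snd (measurableSet_singleton 0))
    rw [Measure.dirac_apply' _ hms]
    rw [Set.indicator_of_notMem]
    · exact zero_lt_one
    · simp

lemma tdm_dirac : tdm Λ (Measure.dirac ((1:ℝ), (1:ℝ))) = Λ 1 1 := by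
  unfold tdm
  rw [integral_dirac, integral_dirac]
  simp

lemma exists_argmax (hC : IsCopula C) (hΛ : HasTDF C Λ) (hc : 0 < Λ 1 1) :
    ∃ a : ℝ, 0 < a ∧ ∀ b : ℝ, 0 < b → Λ b (1 / b) ≤ Λ a (1 / a) := by
  set c := Λ 1 1 with hcdef
  have hc1 : c ≤ 1 := by
    have := lam_le_min hC hΛ (zero_le_one) (zero_le_one)
    simpa using this
  have hK1 : (1:ℝ) ∈ Icc (c/2) (2/c) := by
    constructor
    · linarith
    · rw [le_div_iff₀ hc]; linarith
  have hsub : Icc (c/2) (2/c) ⊆ Ioi (0:ℝ) := by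
    intro x hx
    have : 0 < c/2 := by linarith
    exact lt_of_lt_of_le this hx.1
  have hcont : ContinuousOn (fun b : ℝ => Λ b (1/b)) (Icc (c/2) (2/c)) := by
    have h1 : ContinuousOn (fun b : ℝ => clampF Λ (b, b⁻¹)) (Icc (c/2) (2/c)) := by
      refine (clampF_cont hC hΛ).comp_continuousOn ?_
      exact continuousOn_id.prodMk (continuousOn_inv₀.mono (fun x hx => ne_of_gt (hsub hx)))
    refine h1.congr fun b hb => ?_
    have hb0 : 0 < b := hsub hb
    have hbinv : 0 < b⁻¹ := inv_pos.mpr hb0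
    simp [clampF, max_eq_left hb0.le, max_eq_left hbinv.le, one_div]
  obtain ⟨a, haK, hmax⟩ := isCompact_Icc.exists_isMaxOn ⟨1, hK1⟩ hcont
  have hg1 : Λ 1 (1/1) = c := by norm_num [hcdef]
  refine ⟨a, lt_of_lt_of_le (by linarith : (0:ℝ) < c/2) haK.1, fun b hb => ?_⟩
  by_cases hbK : b ∈ Icc (c/2) (2/c)
  · exact hmax hbK
  · have hba : c ≤ Λ a (1/a) := by
      have h := hmax hK1
      simp only [Set.mem_setOf_eq] at h
      rw [hg1] at h
      exact h
    have hmin : Λ b (1/b) ≤ min b (1/b) :=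
      lam_le_min hC hΛ hb.le (by positivity)
    rcases not_and_or.mp (fun h => hbK ⟨h.1, h.2⟩) with h | h
    · push_neg at h
      have : min b (1/b) ≤ b := min_le_left _ _
      linarith
    · push_neg at h
      have h2c : 0 < 2/c := by positivity
      have hinv : 1/b < c/2 := by
        rw [div_lt_div_iff₀ hb (by linarith : (0:ℝ) < 2)]
        rw [div_lt_iff₀ hc] at h
        linarith
      have : min b (1/b) ≤ 1/b := min_le_right _ _
      linarith

lemma chiBar_lt_one (hC : IsCopula C) (hΛ : HasTDF C Λ) (h : Λ 1 1 < 1) :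
    sSup {x : ℝ | ∃ b : ℝ, 0 < b ∧ x = Λ b (1 / b)} < 1 := by
  set c := Λ 1 1 with hcdef
  have hc0 : 0 ≤ c := lam_nonneg hC hΛ zero_le_one zero_le_one
  set ε := (1 - c) / 8 with hεdef
  have hε0 : 0 < ε := by rw [hεdef]; linarith
  have hε8 : ε ≤ 1/8 := by rw [hεdef]; linarith
  have h1ε : (0:ℝ) < 1 - ε := by linarith
  set B := max (1 - ε) (c + 2 * (ε / (1 - ε))) with hBdef
  have hd : ε / (1 - ε) * (1 - ε) = ε := div_mul_cancel₀ _ (ne_of_gt h1ε)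
  have hdle : ε / (1 - ε) ≤ 2 * ε := by
    rw [div_le_iff₀ h1ε]; nlinarith
  have hdge : ε ≤ ε / (1 - ε) := by
    rw [le_div_iff₀ h1ε]; nlinarith
  have hB1 : B < 1 := by
    rw [hBdef, max_lt_iff]
    constructor
    · linarith
    · rw [hεdef] at hdle ⊢; linarith
  have hB0 : 0 ≤ B := le_trans (by linarith) (le_max_left _ _)
  refine lt_of_le_of_lt (Real.sSup_le ?_ hB0) hB1
  rintro x ⟨b, hb, rfl⟩
  have hbinv : 0 < 1/b := by positivity
  have hmin : Λ b (1/b) ≤ min b (1/b) := lam_le_min hC hΛ hb.le hbinv.le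
  by_cases hcase : min b (1/b) ≤ 1 - ε
  · exact le_trans (le_trans hmin hcase) (le_max_left _ _)
  · push_neg at hcase
    have hb1 : 1 - ε < b := lt_of_lt_of_le hcase (min_le_left _ _)
    have hb2 : 1 - ε < 1/b := lt_of_lt_of_le hcase (min_le_right _ _)
    have hbb : b * (1/b) = 1 := by field_simp
    have f1 : b - 1 ≤ ε / (1 - ε) := by nlinarith
    have f2 : 1 - b ≤ ε / (1 - ε) := by nlinarith
    have f3 : 1/b - 1 ≤ ε / (1 - ε) := by nlinarith
    have f4 : 1 - 1/b ≤ ε / (1 - ε) := by nlinarith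
    have habs1 : |b - 1| ≤ ε / (1 - ε) := abs_sub_le_iff.mpr ⟨f1, f2⟩
    have habs2 : |1/b - 1| ≤ ε / (1 - ε) := abs_sub_le_iff.mpr ⟨f3, f4⟩
    have hlip := lam_lip hC hΛ hb.le hbinv.le zero_le_one zero_le_one
    refine le_trans ?_ (le_max_right (1 - ε) _)
    rw [hcdef]
    linarith


theorem maximal_tail_dependence_degenerate_cases (C Λ : ℝ → ℝ → ℝ)
    (hC : IsCopula C) (hΛ : HasTDF C Λ) :
    let chiBar : ℝ := sSup {x : ℝ | ∃ b : ℝ, 0 < b ∧ x = Λ b (1 / b)}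
    let A : Set ℝ := {a : ℝ | 0 < a ∧ ∀ b : ℝ, 0 < b → Λ b (1 / b) ≤ Λ a (1 / a)}
    let mBar : ℝ := sSup {x : ℝ | ∃ a ∈ A, x = min a (1 / a)}
    let chiStar : ℝ := chiBar / mBar
    let lamBar : ℝ := sSup {x : ℝ | ∃ μ : Measure (ℝ × ℝ), IsTailGenMeasure μ ∧ x = tdm Λ μ}
    (Λ 1 1 = 0 → chiBar = 0 ∧ chiStar = 0 ∧ lamBar = 0) ∧
    ((chiBar = 0 ∨ chiStar = 0 ∨ lamBar = 0) → Λ 1 1 = 0) ∧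
    (Λ 1 1 = 1 → chiBar = 1 ∧ chiStar = 1 ∧ lamBar = 1) ∧
    (chiBar = 1 → Λ 1 1 = 1) := by
  intro chiBar A mBar chiStar lamBar
  have hΛ11le : Λ 1 1 ≤ 1 := by
    have := lam_le_min hC hΛ (zero_le_one) (zero_le_one); simpa using this
  have hΛ11ge : 0 ≤ Λ 1 1 := lam_nonneg hC hΛ zero_le_one zero_le_one
  have hmin1 : ∀ b : ℝ, 0 < b → min b (1/b) ≤ 1 := by
    intro b hb
    rcases le_total b 1 with h | h
    · exact le_trans (min_le_left _ _) h
    · exact le_trans (min_le_right _ _) (by rw [div_le_one hb]; exact h)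
  have hS1le : ∀ x ∈ {x : ℝ | ∃ b : ℝ, 0 < b ∧ x = Λ b (1 / b)}, x ≤ 1 := by
    rintro x ⟨b, hb, rfl⟩
    exact le_trans (lam_le_min hC hΛ hb.le (by positivity)) (hmin1 b hb)
  have hS1mem : Λ 1 1 ∈ {x : ℝ | ∃ b : ℝ, 0 < b ∧ x = Λ b (1 / b)} :=
    ⟨1, one_pos, by norm_num⟩
  have hS3le : ∀ x ∈ {x : ℝ | ∃ μ : Measure (ℝ × ℝ), IsTailGenMeasure μ ∧ x = tdm Λ μ}, x ≤ 1 := by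
    rintro x ⟨μ, hμ, rfl⟩
    exact (tdm_mem_Icc hC hΛ hμ).2
  have hS3mem : Λ 1 1 ∈ {x : ℝ | ∃ μ : Measure (ℝ × ℝ), IsTailGenMeasure μ ∧ x = tdm Λ μ} :=
    ⟨Measure.dirac ((1:ℝ), (1:ℝ)), dirac_tgm, tdm_dirac.symm⟩
  have hS2le : ∀ x ∈ {x : ℝ | ∃ a ∈ A, x = min a (1 / a)}, x ≤ 1 := by
    rintro x ⟨a, ha, rfl⟩
    exact hmin1 a ha.1
  refine ⟨?_, ?_, ?_, ?_⟩
  · -- Part 1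
    intro h0
    have hchi : chiBar = 0 := by
      have hset : {x : ℝ | ∃ b : ℝ, 0 < b ∧ x = Λ b (1 / b)} = {0} := by
        ext x
        constructor
        · rintro ⟨b, hb, rfl⟩
          exact lam_zero_of hC hΛ h0 hb.le (by positivity)
        · rintro rfl
          exact ⟨1, one_pos, by rw [← h0]; norm_num⟩
      show sSup _ = 0
      rw [hset, csSup_singleton]
    refine ⟨hchi, ?_, ?_⟩
    · show chiBar / mBar = 0
      rw [hchi, zero_div]
    · show sSup _ = 0
      have hset : {x : ℝ | ∃ μ : Measure (ℝ × ℝ), IsTailGenMeasure μ ∧ x = tdm Λ μ} = {0} := by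
        ext x
        constructor
        · rintro ⟨μ, hμ, rfl⟩
          exact tdm_zero hC hΛ h0 hμ
        · rintro rfl
          exact ⟨Measure.dirac ((1:ℝ), (1:ℝ)), dirac_tgm, (tdm_zero hC hΛ h0 dirac_tgm).symm⟩
      rw [hset, csSup_singleton]
  · -- Part 2
    intro hdisj
    by_contra h0ne
    have hpos : 0 < Λ 1 1 := lt_of_le_of_ne hΛ11ge (Ne.symm h0ne)
    have hchi : 0 < chiBar := lt_of_lt_of_le hpos (le_csSup ⟨1, hS1le⟩ hS1mem)
    have hmB : 0 < mBar := by
      obtain ⟨a, ha0, hamax⟩ := exists_argmax hC hΛ hpos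
      have hmem : min a (1/a) ∈ {x : ℝ | ∃ a ∈ A, x = min a (1 / a)} :=
        ⟨a, ⟨ha0, hamax⟩, rfl⟩
      have : 0 < min a (1/a) := lt_min ha0 (by positivity)
      exact lt_of_lt_of_le this (le_csSup ⟨1, hS2le⟩ hmem)
    have hcs : 0 < chiStar := div_pos hchi hmB
    have hlam : 0 < lamBar := lt_of_lt_of_le hpos (le_csSup ⟨1, hS3le⟩ hS3mem)
    rcases hdisj with h | h | h
    · exact (ne_of_gt hchi) h
    · exact (ne_of_gt hcs) h
    · exact (ne_of_gt hlam) h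
  · -- Part 3
    intro h1
    have hchi : chiBar = 1 := by
      refine le_antisymm (Real.sSup_le hS1le zero_le_one) ?_
      have : (1:ℝ) ∈ {x : ℝ | ∃ b : ℝ, 0 < b ∧ x = Λ b (1 / b)} :=
        ⟨1, one_pos, by rw [one_div_one]; exact h1.symm⟩
      exact le_csSup ⟨1, hS1le⟩ this
    have hmB : mBar = 1 := by
      have h1A : (1:ℝ) ∈ A := by
        refine ⟨one_pos, fun b hb => ?_⟩
        have : Λ 1 (1/1) = 1 := by rw [one_div_one]; exact h1
        rw [this]
        exact le_trans (lam_le_min hC hΛ hb.le (by positivity)) (hmin1 b hb)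
      have hmem : (1:ℝ) ∈ {x : ℝ | ∃ a ∈ A, x = min a (1 / a)} := ⟨1, h1A, by norm_num⟩
      exact le_antisymm (Real.sSup_le hS2le zero_le_one) (le_csSup ⟨1, hS2le⟩ hmem)
    refine ⟨hchi, ?_, ?_⟩
    · show chiBar / mBar = 1
      rw [hchi, hmB]; norm_num
    · refine le_antisymm (Real.sSup_le hS3le zero_le_one) ?_
      have : (1:ℝ) ∈ {x : ℝ | ∃ μ : Measure (ℝ × ℝ), IsTailGenMeasure μ ∧ x = tdm Λ μ} :=
        ⟨Measure.dirac ((1:ℝ), (1:ℝ)), dirac_tgm, by rw [tdm_dirac]; exact h1.symm⟩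
      exact le_csSup ⟨1, hS3le⟩ this
  · -- Part 4
    intro hchi
    by_contra h
    have hlt : Λ 1 1 < 1 := lt_of_le_of_ne hΛ11le h
    have := chiBar_lt_one hC hΛ hlt
    rw [show sSup {x : ℝ | ∃ b : ℝ, 0 < b ∧ x = Λ b (1 / b)} = chiBar from rfl, hchi] at this
    exact lt_irrefl 1 this
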